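/- If c = (c_1,c_2,c_3,c_4,c_5) ∈ ℤ⁵ is cohomology-free, then −3 ≤ c_5 ≤ 3. -/

import Mathlib

/-- The primitive ray generators `l₁,…,l₇` of the fan, in counterclockwise order,
acting on `ℤ²` by the dot product. -/
def rayForm : Fin 7 → ℤ × ℤ :=
  ![(1, -1), (2, -1), (3, -1), (1, 0), (0, 1), (-1, 2), (0, -1)]

/-- Extend `c ∈ ℤ⁵` to seven coefficients by `c₆ = c₇ = 0`. -/
def cExt (c : Fin 5 → ℤ) : Fin 7 → ℤ :=
  fun i => if h : (i : ℕ) < 5 then c ⟨i, h⟩ else 0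

/-- `N_c(m) = {i : l_i(m) + c_i < 0}`. -/
def Nset (c : Fin 5 → ℤ) (m : ℤ × ℤ) : Finset (Fin 7) :=
  Finset.univ.filter fun i =>
    (rayForm i).1 * m.1 + (rayForm i).2 * m.2 + cExt c i < 0

open Fin.NatCast

/-- A subset of the cyclic index set `Fin 7` is a circular interval if it is empty
or of the form `{a, a+1, …, b}` with indices taken modulo 7. -/
def IsCircularInterval (S : Finset (Fin 7)) : Prop :=
  S = ∅ ∨ ∃ (a : Fin 7) (n : ℕ),
    S = (Finset.range (n + 1)).image fun j : ℕ => a + (j : Fin 7)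

/-- `c ∈ ℤ⁵` is cohomology-free if for every `m ∈ ℤ²` and both `ε ∈ {1, -1}`,
the set `N_{εc}(m)` is a circular interval different from the whole index set. -/
def CohomologyFree (c : Fin 5 → ℤ) : Prop :=
  ∀ m : ℤ × ℤ, ∀ ε : ℤ, ε = 1 ∨ ε = -1 →
    IsCircularInterval (Nset (ε • c) m) ∧ Nset (ε • c) m ≠ Finset.univ

lemma mem_Nset (d : Fin 5 → ℤ) (m : ℤ × ℤ) (i : Fin 7) :
    i ∈ Nset d m ↔ (rayForm i).1 * m.1 + (rayForm i).2 * m.2 + cExt d i < 0 := by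
  simp [Nset]

lemma mem0 (d : Fin 5 → ℤ) (x y : ℤ) :
    (0:Fin 7) ∈ Nset d (x, y) ↔ 1 * x + (-1) * y + d 0 < 0 := mem_Nset d (x, y) 0
lemma mem1 (d : Fin 5 → ℤ) (x y : ℤ) :
    (1:Fin 7) ∈ Nset d (x, y) ↔ 2 * x + (-1) * y + d 1 < 0 := mem_Nset d (x, y) 1
lemma mem2 (d : Fin 5 → ℤ) (x y : ℤ) :
    (2:Fin 7) ∈ Nset d (x, y) ↔ 3 * x + (-1) * y + d 2 < 0 := mem_Nset d (x, y) 2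
lemma mem3 (d : Fin 5 → ℤ) (x y : ℤ) :
    (3:Fin 7) ∈ Nset d (x, y) ↔ 1 * x + 0 * y + d 3 < 0 := mem_Nset d (x, y) 3
lemma mem4 (d : Fin 5 → ℤ) (x y : ℤ) :
    (4:Fin 7) ∈ Nset d (x, y) ↔ 0 * x + 1 * y + d 4 < 0 := mem_Nset d (x, y) 4
lemma mem5 (d : Fin 5 → ℤ) (x y : ℤ) :
    (5:Fin 7) ∈ Nset d (x, y) ↔ (-1) * x + 2 * y + 0 < 0 := mem_Nset d (x, y) 5
lemma mem6 (d : Fin 5 → ℤ) (x y : ℤ) :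
    (6:Fin 7) ∈ Nset d (x, y) ↔ 0 * x + (-1) * y + 0 < 0 := mem_Nset d (x, y) 6

/-- A circular interval containing `5` but neither `4` nor `6` cannot contain any
index `j < 4`. -/
lemma noInt (S : Finset (Fin 7)) (h : IsCircularInterval S)
    (h5 : (5:Fin 7) ∈ S) (h4 : (4:Fin 7) ∉ S) (h6 : (6:Fin 7) ∉ S)
    (j : Fin 7) (hj : (j:ℕ) < 4) (hjS : j ∈ S) : False := by
  rcases h with rfl | ⟨a, n, rfl⟩
  · simp at h5
  · by_cases hn : 6 ≤ n
    · apply h4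
      rw [Finset.mem_image]
      refine ⟨((4 - a : Fin 7)).val, Finset.mem_range.mpr ?_, ?_⟩
      · have := (4 - a : Fin 7).isLt; omega
      · rw [Fin.cast_val_eq_self]; exact add_sub_cancel a 4
    · push_neg at hn
      interval_cases n <;> fin_cases a <;> revert h5 h4 h6 j <;> decide

lemma key (c : Fin 5 → ℤ) (h : CohomologyFree c) : c 4 ≤ 3 := by
  by_contra hc
  push_neg at hc
  have h1 := h (-2 * c 4 + 1, -(c 4)) 1 (Or.inl rfl)
  rw [one_smul] at h1
  have hS5 : (5 : Fin 7) ∈ Nset c (-2 * c 4 + 1, -(c 4)) := by rw [mem5]; omega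
  have hS4 : (4 : Fin 7) ∉ Nset c (-2 * c 4 + 1, -(c 4)) := by rw [mem4]; omega
  have hS6 : (6 : Fin 7) ∉ Nset c (-2 * c 4 + 1, -(c 4)) := by rw [mem6]; omega
  have hb0 : c 0 ≥ c 4 - 1 := by
    by_contra hb; push_neg at hb
    exact noInt _ h1.1 hS5 hS4 hS6 0 (by decide) (by rw [mem0]; omega)
  have hb1 : c 1 ≥ 3 * c 4 - 2 := by
    by_contra hb; push_neg at hb
    exact noInt _ h1.1 hS5 hS4 hS6 1 (by decide) (by rw [mem1]; omega)
  have hb2 : c 2 ≥ 5 * c 4 - 3 := by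
    by_contra hb; push_neg at hb
    exact noInt _ h1.1 hS5 hS4 hS6 2 (by decide) (by rw [mem2]; omega)
  have hb3 : c 3 ≥ 2 * c 4 - 1 := by
    by_contra hb; push_neg at hb
    exact noInt _ h1.1 hS5 hS4 hS6 3 (by decide) (by rw [mem3]; omega)
  have h2 := h (3, 1) (-1) (Or.inr rfl)
  apply h2.2
  have hd : ∀ j : Fin 5, ((-1 : ℤ) • c) j = -(c j) := fun j => by simp
  apply Finset.eq_univ_iff_forall.mpr
  intro i
  fin_cases i
  · exact (mem0 _ 3 1).mpr (by rw [hd]; omega)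
  · exact (mem1 _ 3 1).mpr (by rw [hd]; omega)
  · exact (mem2 _ 3 1).mpr (by rw [hd]; omega)
  · exact (mem3 _ 3 1).mpr (by rw [hd]; omega)
  · exact (mem4 _ 3 1).mpr (by rw [hd]; omega)
  · exact (mem5 _ 3 1).mpr (by omega)
  · exact (mem6 _ 3 1).mpr (by omega)

lemma cfNeg (c : Fin 5 → ℤ) (h : CohomologyFree c) : CohomologyFree (-c) := by
  intro m ε hε
  have h2 := h m (-ε) (by rcases hε with rfl | rfl
                          · right; norm_num
                          · left; norm_num)
  have he : ε • (-c) = (-ε) • c := by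
    ext i; simp
  rw [he]
  exact h2

/-- If `c` is cohomology-free then `-3 ≤ c₅ ≤ 3`. -/
theorem c5_bounded (c : Fin 5 → ℤ) (h : CohomologyFree c) :
    -3 ≤ c 4 ∧ c 4 ≤ 3 := by
  constructor
  · have := key (-c) (cfNeg c h)
    simp at this
    omega
  · exact key c h
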